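/- Let H be a real Hilbert space and f : H → ℝ ∪ {+∞} a proper closed convex function. Then the set S = cl conv { (−f*(v), v) : v ∈ dom f* } is an affine support set of f (i.e., S is closed convex and f(x) = sup_{(a,v) ∈ S} (a + ⟨v, x⟩) for all x), and moreover S is contained in every affine support set of f. -/

import Mathlib

open scoped RealInnerProductSpace

private lemma repr1 {H : Type*} [NormedAddCommGroup H] [InnerProductSpace ℝ H] [CompleteSpace H]
    (φ : (H × ℝ) →L[ℝ] ℝ) : ∃ (z : H) (c : ℝ), ∀ p : H × ℝ, φ p = ⟪z, p.1⟫ + c * p.2 := by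
  refine ⟨(InnerProductSpace.toDual ℝ H).symm (φ.comp (ContinuousLinearMap.inl ℝ H ℝ)), φ (0, 1),
    fun p => ?_⟩
  have h1 : ⟪(InnerProductSpace.toDual ℝ H).symm (φ.comp (ContinuousLinearMap.inl ℝ H ℝ)), p.1⟫
      = φ (p.1, 0) := by rw [InnerProductSpace.toDual_symm_apply]; rfl
  have h2 : φ (0, p.2) = φ (0, 1) * p.2 := by
    have h : ((0 : H), p.2) = p.2 • ((0:H), (1:ℝ)) := by simp
    rw [h, map_smul]; simp [mul_comm]
  have h3 : p = (p.1, (0:ℝ)) + ((0:H), p.2) := by simp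
  rw [h1, ← h2, ← map_add, ← h3]

private lemma epi_closed {H : Type*} [NormedAddCommGroup H] (f : H → EReal)
    (hlsc : LowerSemicontinuous f) : IsClosed {p : H × ℝ | f p.1 ≤ (p.2 : EReal)} := by
  rw [← isOpen_compl_iff]
  have he : {p : H × ℝ | f p.1 ≤ (p.2:EReal)}ᶜ
      = ⋃ r : ℝ, {x : H | (r:EReal) < f x} ×ˢ Set.Iio r := by
    ext p
    simp only [Set.mem_compl_iff, Set.mem_setOf_eq, not_le, Set.mem_iUnion, Set.mem_prod,
      Set.mem_Iio]
    constructor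
    · intro h
      obtain ⟨r, h1, h2⟩ := EReal.lt_iff_exists_real_btwn.1 h
      exact ⟨r, h2, by exact_mod_cast h1⟩
    · rintro ⟨r, h1, h2⟩
      exact lt_trans (by exact_mod_cast h2) h1
  rw [he]
  exact isOpen_iUnion fun r => (hlsc.isOpen_preimage _).prod isOpen_Iio

private lemma key_minorant {H : Type*} [NormedAddCommGroup H] [InnerProductSpace ℝ H]
    [CompleteSpace H] (f : H → EReal) (x1 : H) (y1 : ℝ) (hx1 : f x1 = (y1:EReal))
    (hproper_bot : ∀ x, f x ≠ ⊥) (hlsc : LowerSemicontinuous f)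
    (hconv : Convex ℝ {p : H × ℝ | f p.1 ≤ (p.2 : EReal)})
    (fconj : H → EReal)
    (hfconj : ∀ v, fconj v = ⨆ x, (((inner ℝ v x : ℝ) : EReal) - f x))
    (x0 : H) (r : ℝ) (hr : (r:EReal) < f x0) :
    ∃ v : H, fconj v ≠ ⊤ ∧ r < -(fconj v).toReal + ⟪v, x0⟫ := by
  set Epi := {p : H × ℝ | f p.1 ≤ (p.2 : EReal)} with hEpi
  have hEc : IsClosed Epi := epi_closed f hlsc
  have ne_bot : ∀ v, fconj v ≠ ⊥ := by
    intro v
    have h1 : ((⟪v,x1⟫ - y1 : ℝ) : EReal) ≤ fconj v := by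
      rw [hfconj]
      refine le_trans ?_ (le_iSup _ x1)
      rw [hx1, EReal.coe_sub]
    intro h
    rw [h, le_bot_iff] at h1
    exact EReal.coe_ne_bot _ h1
  have conj_le : ∀ (v : H) (b : ℝ), (∀ x (yx:ℝ), f x ≤ (yx:EReal) → ⟪v,x⟫ - b ≤ yx) →
      fconj v ≤ (b:EReal) := by
    intro v b hvb
    rw [hfconj]
    refine iSup_le fun x => ?_
    rcases eq_or_ne (f x) ⊤ with hx | hx
    · rw [hx]; simp
    · have hfx : f x = (((f x).toReal : ℝ) : EReal) := (EReal.coe_toReal hx (hproper_bot x)).symm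
      have h := hvb x (f x).toReal (le_of_eq hfx)
      rw [hfx, ← EReal.coe_sub]
      exact EReal.coe_le_coe_iff.2 (by linarith)
  have FIN : ∀ (v : H) (b : ℝ), (∀ x (yx:ℝ), f x ≤ (yx:EReal) → ⟪v,x⟫ - b ≤ yx) →
      r < ⟪v,x0⟫ - b → ∃ v' : H, fconj v' ≠ ⊤ ∧ r < -(fconj v').toReal + ⟪v',x0⟫ := by
    intro v b h1 h2
    have h3 : fconj v ≤ (b:EReal) := conj_le v b h1
    have h4 : fconj v ≠ ⊤ := (h3.trans_lt (EReal.coe_lt_top b)).ne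
    have h5 : (fconj v).toReal ≤ b := by
      simpa using EReal.toReal_le_toReal h3 (ne_bot v) (EReal.coe_ne_top b)
    exact ⟨v, h4, by linarith⟩
  have SEP : ∀ q : H × ℝ, q ∉ Epi → ∃ (z : H) (c u : ℝ), c ≤ 0 ∧
      (∀ p ∈ Epi, ⟪z,p.1⟫ + c*p.2 < u) ∧ u < ⟪z,q.1⟫ + c*q.2 := by
    intro q hq
    obtain ⟨φ, u, hφ, hqφ⟩ := geometric_hahn_banach_closed_point hconv hEc hq
    obtain ⟨z, c, hrep⟩ := repr1 φ
    refine ⟨z, c, u, ?_, fun p hp => hrep p ▸ hφ p hp, hrep q ▸ hqφ⟩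
    by_contra hcpos
    push_neg at hcpos
    set n := (max 0 ((u - ⟪z,x1⟫ - c*y1)/c)) + 1 with hn_def
    have hn : (u - ⟪z,x1⟫ - c*y1)/c < n := lt_of_le_of_lt (le_max_right _ _) (lt_add_one _)
    have hn0 : 0 ≤ n := by
      rw [hn_def]
      have := le_max_left (0:ℝ) ((u - ⟪z,x1⟫ - c*y1)/c); linarith
    have hmem : (x1, y1 + n) ∈ Epi := by
      show f x1 ≤ ((y1 + n : ℝ) : EReal)
      rw [hx1]
      exact EReal.coe_le_coe_iff.2 (by linarith)
    have hlt := hφ _ hmem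
    rw [hrep] at hlt
    have hlt' : ⟪z,x1⟫ + c*(y1+n) < u := hlt
    rw [div_lt_iff₀ hcpos] at hn
    nlinarith
  have NEG : ∀ (z : H) (c u : ℝ), c < 0 → (∀ p ∈ Epi, ⟪z,p.1⟫ + c*p.2 < u) →
      ∃ (v : H) (b : ℝ), (∀ x (yx:ℝ), f x ≤ (yx:EReal) → ⟪v,x⟫ - b ≤ yx) ∧
        (∀ (x:H) (t:ℝ), u < ⟪z,x⟫ + c*t → t < ⟪v,x⟫ - b) := by
    intro z c u hc hlt
    have hm : 0 < -c := neg_pos.2 hc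
    refine ⟨(-c)⁻¹ • z, u/(-c), ?_, ?_⟩
    · intro x yx hxy
      have h := hlt (x, yx) hxy
      simp only at h
      have h2 : (⟪z,x⟫ - u)/(-c) < yx := (div_lt_iff₀ hm).2 (by nlinarith)
      have h3 : ⟪(-c)⁻¹ • z, x⟫ - u/(-c) = (⟪z,x⟫ - u)/(-c) := by
        rw [real_inner_smul_left]; ring
      rw [h3]; exact h2.le
    · intro x t hgt
      have h2 : t < (⟪z,x⟫ - u)/(-c) := (lt_div_iff₀ hm).2 (by nlinarith)
      have h3 : ⟪(-c)⁻¹ • z, x⟫ - u/(-c) = (⟪z,x⟫ - u)/(-c) := by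
        rw [real_inner_smul_left]; ring
      rw [h3]; exact h2
  have hq0 : (x0, r) ∉ Epi := fun h => absurd h (not_le.2 hr)
  obtain ⟨z, c, u, hc, hlt, hgt⟩ := SEP _ hq0
  have hq1 : (x1, y1 - 1) ∉ Epi := by
    intro h
    have h' : f x1 ≤ ((y1 - 1 : ℝ) : EReal) := h
    rw [hx1, EReal.coe_le_coe_iff] at h'
    linarith
  obtain ⟨z1, c1, u1, hc1, hlt1, hgt1⟩ := SEP _ hq1
  have hc1' : c1 < 0 := by
    rcases hc1.lt_or_eq with h | h
    · exact h
    · exfalso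
      have hm1 : (x1, y1) ∈ Epi := by
        show f x1 ≤ ((y1 : ℝ) : EReal); rw [hx1]
      have h1 : ⟪z1,x1⟫ + c1*y1 < u1 := hlt1 (x1, y1) hm1
      have h2 : u1 < ⟪z1,x1⟫ + c1*(y1-1) := hgt1
      rw [h] at h1 h2
      simp at h1 h2
      linarith
  obtain ⟨v0, b0, hv0, -⟩ := NEG z1 c1 u1 hc1' hlt1
  rcases hc.lt_or_eq with hcneg | hczero
  · obtain ⟨v, b, h1, h2⟩ := NEG z c u hcneg hlt
    exact FIN v b h1 (h2 x0 r hgt)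
  · have hgt' : u < ⟪z,x0⟫ := by
      have : u < ⟪z,x0⟫ + c*r := hgt
      rw [hczero] at this; linarith
    have h0 : ∀ x (yx:ℝ), f x ≤ (yx:EReal) → ⟪z,x⟫ < u := by
      intro x yx h
      have h' : ⟪z,x⟫ + c*yx < u := hlt (x, yx) h
      rw [hczero] at h'; linarith
    set gap := ⟪z,x0⟫ - u with hgap
    have hgap0 : 0 < gap := sub_pos.2 hgt'
    set X := ⟪v0,x0⟫ - b0 with hX
    set t := max 0 ((r - X + 1)/gap) with ht
    have ht0 : 0 ≤ t := le_max_left _ _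
    refine FIN (v0 + t • z) (b0 + t * u) ?_ ?_
    · intro x yx h
      have ha := hv0 x yx h
      have hb := h0 x yx h
      have hv : ⟪v0 + t • z, x⟫ = ⟪v0,x⟫ + t*⟪z,x⟫ := by
        rw [inner_add_left, real_inner_smul_left]
      rw [hv]
      nlinarith [mul_le_mul_of_nonneg_left hb.le ht0]
    · have hv : ⟪v0 + t • z, x0⟫ = ⟪v0,x0⟫ + t*⟪z,x0⟫ := by
        rw [inner_add_left, real_inner_smul_left]
      have htg : ⟪v0 + t • z, x0⟫ - (b0 + t*u) = X + t*gap := by rw [hv, hX, hgap]; ring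
      rw [htg]
      rcases le_or_gt (r - X + 1) 0 with hcase | hcase
      · nlinarith [mul_nonneg ht0 hgap0.le]
      · have h5 : (r - X + 1)/gap ≤ t := le_max_right _ _
        rw [div_le_iff₀ hgap0] at h5
        nlinarith

private lemma repr2 {H : Type*} [NormedAddCommGroup H] [InnerProductSpace ℝ H] [CompleteSpace H]
    (φ : (ℝ × H) →L[ℝ] ℝ) : ∃ (z : H) (lam : ℝ), ∀ p : ℝ × H, φ p = lam * p.1 + ⟪z, p.2⟫ := by
  refine ⟨(InnerProductSpace.toDual ℝ H).symm (φ.comp (ContinuousLinearMap.inr ℝ ℝ H)), φ (1, 0),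
    fun p => ?_⟩
  have h1 : ⟪(InnerProductSpace.toDual ℝ H).symm (φ.comp (ContinuousLinearMap.inr ℝ ℝ H)), p.2⟫
      = φ (0, p.2) := by rw [InnerProductSpace.toDual_symm_apply]; rfl
  have h2 : φ (p.1, 0) = φ (1, 0) * p.1 := by
    have h : (p.1, (0 : H)) = p.1 • ((1:ℝ), (0:H)) := by simp
    rw [h, map_smul]; simp [mul_comm]
  have h3 : p = (p.1, (0:H)) + ((0:ℝ), p.2) := by simp
  rw [h1, ← h2, ← map_add, ← h3]

private lemma aux_sub {a c : ℝ} {y : EReal} (hy : y ≠ ⊥) (h : (a:EReal) - y ≤ (c:EReal)) :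
    ((a - c : ℝ) : EReal) ≤ y := by
  induction y with
  | bot => exact absurd rfl hy
  | coe y =>
      rw [← EReal.coe_sub, EReal.coe_le_coe_iff] at h
      exact EReal.coe_le_coe_iff.2 (by linarith)
  | top => exact le_top

private lemma mul_ne_bot_of {mu : ℝ} (hmu : 0 ≤ mu) {y : EReal} (hy : y ≠ ⊥) :
    (mu:EReal) * y ≠ ⊥ := by
  induction y with
  | bot => exact absurd rfl hy
  | coe y => rw [← EReal.coe_mul]; exact EReal.coe_ne_bot _
  | top =>
      rcases eq_or_lt_of_le hmu with h | h
      · rw [← h]; simp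
      · rw [EReal.coe_mul_top_of_pos h]; simp

private lemma tchoice (gap M : ℝ) (hgap : 0 < gap) : ∃ t : ℝ, 0 ≤ t ∧ M < t * gap := by
  refine ⟨max 0 ((M+1)/gap), le_max_left _ _, ?_⟩
  rcases le_or_gt ((M+1)/gap) 0 with h | h
  · have h2 : M + 1 ≤ 0 * gap := (div_le_iff₀ hgap).1 h
    have h3 : 0 * gap ≤ (max 0 ((M+1)/gap)) * gap :=
      mul_le_mul_of_nonneg_right (le_max_left _ _) hgap.le
    linarith
  · have h2 : M + 1 ≤ (max 0 ((M+1)/gap)) * gap := (div_le_iff₀ hgap).1 (le_max_right _ _)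
    linarith

theorem smallest_affine_support_set
    {H : Type*} [NormedAddCommGroup H] [InnerProductSpace ℝ H] [CompleteSpace H]
    (f : H → EReal)
    (hproper_top : ∃ x, f x ≠ ⊤) (hproper_bot : ∀ x, f x ≠ ⊥)
    (hlsc : LowerSemicontinuous f)
    (hconv : Convex ℝ {p : H × ℝ | f p.1 ≤ (p.2 : EReal)})
    (fconj : H → EReal)
    (hfconj : ∀ v, fconj v = ⨆ x, (((inner ℝ v x : ℝ) : EReal) - f x))
    (S : Set (ℝ × H))
    (hS : S = closure (convexHull ℝ
      {p : ℝ × H | fconj p.2 ≠ ⊤ ∧ p.1 = -(fconj p.2).toReal})) :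
    IsClosed S ∧ Convex ℝ S
      ∧ (∀ x, f x = ⨆ p ∈ S, ((p.1 + inner ℝ p.2 x : ℝ) : EReal))
      ∧ ∀ T : Set (ℝ × H), IsClosed T → Convex ℝ T →
          (∀ x, f x = ⨆ p ∈ T, ((p.1 + inner ℝ p.2 x : ℝ) : EReal)) → S ⊆ T := by
  obtain ⟨x1, hx1top⟩ := hproper_top
  have hx1 : f x1 = (((f x1).toReal : ℝ) : EReal) := (EReal.coe_toReal hx1top (hproper_bot x1)).symm
  set y1 := (f x1).toReal with hy1
  have ne_bot : ∀ v, fconj v ≠ ⊥ := by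
    intro v
    have h1 : ((⟪v,x1⟫ - y1 : ℝ) : EReal) ≤ fconj v := by
      rw [hfconj]
      refine le_trans ?_ (le_iSup _ x1)
      rw [hx1, EReal.coe_sub]
    intro h
    rw [h, le_bot_iff] at h1
    exact EReal.coe_ne_bot _ h1
  have FY' : ∀ v, fconj v ≠ ⊤ → ∀ x, ((⟪v,x⟫ - (fconj v).toReal : ℝ) : EReal) ≤ f x := by
    intro v hv x
    have h1 : ((⟪v,x⟫ : ℝ) : EReal) - f x ≤ fconj v := by
      rw [hfconj]
      exact le_iSup (fun x => ((⟪v,x⟫ : ℝ) : EReal) - f x) x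
    have h2 : ((⟪v,x⟫ : ℝ) : EReal) - f x ≤ (((fconj v).toReal : ℝ) : EReal) := by
      rwa [EReal.coe_toReal hv (ne_bot v)]
    exact aux_sub (hproper_bot x) h2
  refine ⟨hS ▸ isClosed_closure, hS ▸ (convex_convexHull ℝ _).closure, ?_, ?_⟩
  · -- PART 2
    intro x
    apply le_antisymm
    · apply EReal.ge_of_forall_gt_iff_ge.1
      intro r hrf
      obtain ⟨v, hv, hrv⟩ := key_minorant f x1 y1 hx1 hproper_bot hlsc hconv fconj hfconj x r hrf
      have hmem : ((-(fconj v).toReal : ℝ), v) ∈ S := by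
        rw [hS]; exact subset_closure (subset_convexHull ℝ _ ⟨hv, rfl⟩)
      calc (r : EReal) ≤ ((-(fconj v).toReal + ⟪v,x⟫ : ℝ) : EReal) :=
            EReal.coe_le_coe_iff.2 hrv.le
        _ ≤ ⨆ p ∈ S, ((p.1 + inner ℝ p.2 x : ℝ) : EReal) :=
            le_iSup₂_of_le ((-(fconj v).toReal : ℝ), v) hmem (le_refl _)
    · rcases eq_or_ne (f x) ⊤ with htop | htop
      · rw [htop]; exact le_top
      have hfx : f x = (((f x).toReal : ℝ) : EReal) := (EReal.coe_toReal htop (hproper_bot x)).symm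
      set y := (f x).toReal with hy
      have hsub : S ⊆ {p : ℝ × H | p.1 + ⟪p.2, x⟫ ≤ y} := by
        rw [hS]
        refine closure_minimal (convexHull_min ?_ ?_) ?_
        · rintro ⟨a, v⟩ ⟨hv, ha⟩
          have hv' : fconj v ≠ ⊤ := hv
          have ha' : a = -(fconj v).toReal := ha
          have h1 := FY' v hv' x
          rw [hfx, EReal.coe_le_coe_iff] at h1
          show a + ⟪v, x⟫ ≤ y
          rw [ha']
          linarith
        · have hlin : IsLinearMap ℝ (fun p : ℝ × H => p.1 + ⟪p.2, x⟫) := by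
            constructor
            · intro p q
              simp only [Prod.fst_add, Prod.snd_add, inner_add_left]
              ring
            · intro c p
              simp only [Prod.smul_fst, Prod.smul_snd, real_inner_smul_left, smul_eq_mul]
              ring
          exact convex_halfSpace_le hlin y
        · have hcont : Continuous (fun p : ℝ × H => p.1 + ⟪p.2, x⟫) :=
            continuous_fst.add (Continuous.inner continuous_snd continuous_const)
          exact isClosed_le hcont continuous_const
      refine iSup₂_le fun p hp => ?_
      rw [hfx]
      exact EReal.coe_le_coe_iff.2 (hsub hp)
  · -- PART 3
    intro T hTc hTconv hT
    have hTle : ∀ p ∈ T, ∀ x : H, ((p.1 + ⟪p.2,x⟫ : ℝ) : EReal) ≤ f x := by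
      intro p hp x
      rw [hT x]
      exact le_iSup₂_of_le p hp (le_refl _)
    have hTbound : ∀ p ∈ T, ∀ x : H, ((⟪p.2,x⟫ : ℝ) : EReal) - f x ≤ ((-p.1 : ℝ) : EReal) := by
      intro p hp x
      rcases eq_or_ne (f x) ⊤ with hx | hx
      · rw [hx]; simp
      · have hfx : f x = (((f x).toReal : ℝ):EReal) := (EReal.coe_toReal hx (hproper_bot x)).symm
        have h1 := hTle p hp x
        rw [hfx, EReal.coe_le_coe_iff] at h1
        rw [hfx, ← EReal.coe_sub]
        exact EReal.coe_le_coe_iff.2 (by linarith)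
    rw [hS]
    refine closure_minimal (convexHull_min ?_ hTconv) hTc
    rintro ⟨a, v⟩ ⟨hvtop, ha⟩
    have hfcv : fconj v = (((fconj v).toReal : ℝ) : EReal) := (EReal.coe_toReal hvtop (ne_bot v)).symm
    set cv := (fconj v).toReal with hcv
    by_contra hq
    obtain ⟨φ, u, hφ, hq2⟩ := geometric_hahn_banach_closed_point hTconv hTc hq
    obtain ⟨z, lam, hrep⟩ := repr2 φ
    have hq2' : u < lam * (-cv) + ⟪z,v⟫ := by
      have h := hq2
      rw [hrep] at h
      simp only at ha
      rw [ha] at h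
      exact h
    have hφ' : ∀ p ∈ T, lam * p.1 + ⟪z,p.2⟫ < u := fun p hp => by
      rw [← hrep]; exact hφ p hp
    rcases lt_or_ge 0 lam with hlam | hlam
    · -- lam > 0
      have hfxle : f (lam⁻¹ • z) ≤ ((lam⁻¹ * u : ℝ) : EReal) := by
        rw [hT]
        refine iSup₂_le fun p hp => ?_
        apply EReal.coe_le_coe_iff.2
        have h1 := hφ' p hp
        have h2 : ⟪p.2, lam⁻¹ • z⟫ = lam⁻¹ * ⟪z, p.2⟫ := by
          rw [real_inner_smul_right, real_inner_comm]
        rw [h2]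
        have h3 := mul_le_mul_of_nonneg_left h1.le (inv_nonneg.2 hlam.le)
        have h5 : lam⁻¹ * (lam*p.1 + ⟪z,p.2⟫) = p.1 + lam⁻¹*⟪z,p.2⟫ := by
          rw [mul_add, ← mul_assoc, inv_mul_cancel₀ hlam.ne', one_mul]
        linarith
      have hFY := FY' v hvtop (lam⁻¹ • z)
      have h3 : ⟪v, lam⁻¹ • z⟫ - cv ≤ lam⁻¹ * u := by
        have h := le_trans hFY hfxle
        exact EReal.coe_le_coe_iff.1 h
      have h4 : ⟪v, lam⁻¹ • z⟫ = lam⁻¹ * ⟪z,v⟫ := by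
        rw [real_inner_smul_right, real_inner_comm]
      rw [h4] at h3
      have h5 := mul_lt_mul_of_pos_left hq2' (inv_pos.2 hlam)
      have h7 : lam⁻¹ * (lam*(-cv) + ⟪z,v⟫) = -cv + lam⁻¹*⟪z,v⟫ := by
        rw [mul_add, ← mul_assoc, inv_mul_cancel₀ hlam.ne', one_mul]
      linarith
    · -- lam ≤ 0
      have hmu0 : 0 ≤ -lam := by linarith
      have hlameq : lam = -(-lam) := by ring
      set mu := -lam with hmu
      -- the auxiliary closed convex set K
      set K := {w : H | ∀ x : H, ((mu*⟪w,x⟫ + ⟪z,w⟫ - u : ℝ) : EReal) ≤ (mu : EReal) * f x}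
        with hK
      have hKclosed : IsClosed K := by
        have hKeq : K = ⋂ x : H,
            {w : H | ((mu*⟪w,x⟫ + ⟪z,w⟫ - u : ℝ) : EReal) ≤ (mu : EReal) * f x} := by
          ext w
          simp only [hK, Set.mem_setOf_eq, Set.mem_iInter]
        rw [hKeq]
        refine isClosed_iInter fun x => ?_
        have hcont : Continuous fun w : H => mu*⟪w,x⟫ + ⟪z,w⟫ - u := by
          apply Continuous.sub ?_ continuous_const
          exact ((continuous_const.mul (Continuous.inner continuous_id continuous_const)).add
            (Continuous.inner continuous_const continuous_id))
        have : {w : H | ((mu*⟪w,x⟫ + ⟪z,w⟫ - u : ℝ) : EReal) ≤ (mu : EReal) * f x}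
            = (fun w : H => ((mu*⟪w,x⟫ + ⟪z,w⟫ - u : ℝ) : EReal)) ⁻¹' Set.Iic ((mu : EReal) * f x) := rfl
        rw [this]
        exact IsClosed.preimage (continuous_coe_real_ereal.comp hcont) isClosed_Iic
      have hKconv : Convex ℝ K := by
        intro w1 h1 w2 h2 s t hs ht hst
        intro x
        have ha1 := h1 x
        have hb1 := h2 x
        have hin : ⟪s•w1 + t•w2, x⟫ = s*⟪w1,x⟫ + t*⟪w2,x⟫ := by
          rw [inner_add_left, real_inner_smul_left, real_inner_smul_left]
        have hin2 : ⟪z, s•w1 + t•w2⟫ = s*⟪z,w1⟫ + t*⟪z,w2⟫ := by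
          rw [inner_add_right, real_inner_smul_right, real_inner_smul_right]
        rcases eq_or_ne (f x) ⊤ with hfx | hfx
        · rcases eq_or_lt_of_le hmu0 with hmu' | hmu'
          · have hz : ((mu:ℝ) : EReal) * f x = 0 := by
              rw [hfx, ← hmu']; simp
            rw [hz, ← EReal.coe_zero] at ha1 hb1 ⊢
            rw [EReal.coe_le_coe_iff] at ha1 hb1 ⊢
            rw [hin, hin2]
            have e4 : s*u + t*u = u := by rw [← add_mul, hst, one_mul]
            nlinarith [mul_le_mul_of_nonneg_left ha1 hs, mul_le_mul_of_nonneg_left hb1 ht, e4]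
          · rw [hfx, EReal.coe_mul_top_of_pos hmu']
            exact le_top
        · have hfx' : f x = (((f x).toReal : ℝ):EReal) := (EReal.coe_toReal hfx (hproper_bot x)).symm
          rw [hfx', ← EReal.coe_mul] at ha1 hb1 ⊢
          rw [EReal.coe_le_coe_iff] at ha1 hb1 ⊢
          rw [hin, hin2]
          have e1 := mul_le_mul_of_nonneg_left ha1 hs
          have e2 := mul_le_mul_of_nonneg_left hb1 ht
          have e3 : s * (mu * (f x).toReal) + t * (mu * (f x).toReal) = mu * (f x).toReal := by
            rw [← add_mul, hst, one_mul]
          have e4 : s*u + t*u = u := by rw [← add_mul, hst, one_mul]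
          nlinarith [e1, e2, e3, e4]
      have hDK : ∀ p ∈ T, p.2 ∈ K := by
        intro p hp x
        have hb := hTbound p hp x
        have hlt := hφ' p hp
        have hlt' : -mu*p.1 + ⟪z,p.2⟫ < u := by rw [hmu]; simpa using hlt
        rcases eq_or_ne (f x) ⊤ with hfx | hfx
        · rcases eq_or_lt_of_le hmu0 with hmu' | hmu'
          · have hz : ((mu:ℝ) : EReal) * f x = 0 := by
              rw [hfx, ← hmu']; simp
            rw [hz, ← EReal.coe_zero]
            apply EReal.coe_le_coe_iff.2
            have h0mu : mu = 0 := hmu'.symm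
            rw [h0mu] at hlt' ⊢
            nlinarith [hlt']
          · rw [hfx, EReal.coe_mul_top_of_pos hmu']
            exact le_top
        · have hfx' : f x = (((f x).toReal : ℝ):EReal) := (EReal.coe_toReal hfx (hproper_bot x)).symm
          have hb' : ⟪p.2,x⟫ - (f x).toReal ≤ -p.1 := by
            rw [hfx', ← EReal.coe_sub, EReal.coe_le_coe_iff] at hb
            exact hb
          rw [hfx', ← EReal.coe_mul]
          apply EReal.coe_le_coe_iff.2
          nlinarith [mul_le_mul_of_nonneg_left hb' hmu0]
      have hvD : v ∈ closure (convexHull ℝ (Prod.snd '' T)) := by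
        by_contra hv
        obtain ⟨ψ, u2, hψ, hv2⟩ := geometric_hahn_banach_closed_point
          ((convex_convexHull ℝ _).closure) isClosed_closure hv
        have hz2 : ∀ w, ⟪(InnerProductSpace.toDual ℝ H).symm ψ, w⟫ = ψ w := fun w =>
          InnerProductSpace.toDual_symm_apply
        set z2 := (InnerProductSpace.toDual ℝ H).symm ψ with hz2def
        have hψ' : ∀ p ∈ T, ⟪z2, p.2⟫ < u2 := fun p hp => by
          rw [hz2]
          exact hψ _ (subset_closure (subset_convexHull ℝ _ ⟨p, hp, rfl⟩))
        have hv2' : u2 < ⟪z2, v⟫ := by rw [hz2]; exact hv2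
        have hgap : 0 < ⟪z2,v⟫ - u2 := sub_pos.2 hv2'
        obtain ⟨t, ht0, htM⟩ := tchoice (⟪z2,v⟫ - u2) (y1 + cv - ⟪v,x1⟫) hgap
        have hft : f (x1 + t • z2) ≤ ((y1 + t*u2 : ℝ):EReal) := by
          rw [hT]
          refine iSup₂_le fun p hp => ?_
          apply EReal.coe_le_coe_iff.2
          have h1 : p.1 + ⟪p.2,x1⟫ ≤ y1 := by
            have h := hTle p hp x1
            rw [hx1, EReal.coe_le_coe_iff] at h
            exact h
          have h2 : ⟪p.2, x1 + t • z2⟫ = ⟪p.2,x1⟫ + t*⟪z2,p.2⟫ := by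
            rw [inner_add_right, real_inner_smul_right, real_inner_comm p.2 z2]
          rw [h2]
          have h3 := hψ' p hp
          nlinarith [mul_le_mul_of_nonneg_left h3.le ht0]
        have hFY := FY' v hvtop (x1 + t • z2)
        have h4 : ⟪v, x1 + t•z2⟫ - cv ≤ y1 + t*u2 := by
          have h := le_trans hFY hft
          exact EReal.coe_le_coe_iff.1 h
        have h5 : ⟪v, x1 + t•z2⟫ = ⟪v,x1⟫ + t*⟪z2,v⟫ := by
          rw [inner_add_right, real_inner_smul_right, real_inner_comm v z2]
        rw [h5] at h4
        nlinarith
      have hvK : v ∈ K :=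
        closure_minimal
          (convexHull_min (by rintro w ⟨p, hp, rfl⟩; exact hDK p hp) hKconv) hKclosed hvD
      rcases eq_or_lt_of_le hmu0 with hmu' | hmu'
      · -- mu = 0
        have h7e := hvK x1
        have hz : ((mu:ℝ) : EReal) * f x1 = 0 := by
          rw [hx1, ← hmu']; simp
        rw [hz, ← EReal.coe_zero, EReal.coe_le_coe_iff] at h7e
        have hl0 : lam = 0 := by rw [hmu] at hmu'; linarith
        rw [hl0] at hq2'
        have h0mu : mu = 0 := hmu'.symm
        rw [h0mu] at h7e
        nlinarith [hq2', h7e]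
      · -- mu > 0
        have hq3 : u < mu*cv + ⟪z,v⟫ := by
          have he : lam * (-cv) = mu * cv := by rw [hmu]; ring
          linarith [hq2', he.symm.le, he.le]
        set ε := (mu*cv + ⟪z,v⟫ - u)/mu with hε_def
        have hε : 0 < ε := div_pos (by linarith) hmu'
        have hεeq : mu * ε = mu*cv + ⟪z,v⟫ - u := by
          rw [hε_def]; field_simp
        have hlt2 : ((cv - ε : ℝ) : EReal) < fconj v := by
          rw [hfcv]
          exact EReal.coe_lt_coe_iff.2 (by linarith)
        rw [hfconj] at hlt2
        obtain ⟨x, hx⟩ := lt_iSup_iff.1 hlt2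
        have hfx : f x ≠ ⊤ := by
          intro h
          rw [h] at hx
          simp at hx
        have hfx' : f x = (((f x).toReal : ℝ):EReal) := (EReal.coe_toReal hfx (hproper_bot x)).symm
        have hx2 : cv - ε < ⟪v,x⟫ - (f x).toReal := by
          rw [hfx', ← EReal.coe_sub, EReal.coe_lt_coe_iff] at hx
          exact hx
        have hK2 := hvK x
        rw [hfx', ← EReal.coe_mul, EReal.coe_le_coe_iff] at hK2
        nlinarith [mul_lt_mul_of_pos_left hx2 hmu']
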